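/- Let ℓ ≥ 2 be an integer, ρ ≥ 1 a real number, and let t and α be real numbers with 0 ≤ α ≤ 1 satisfying the two inequalities (ℓ(ℓ+1)/2 − ℓ)·ρ·α + ℓ·ρ ≤ ℓ·t and (2·1/2 − ℓ)·ρ·α + ℓ·ρ ≤ t. Then t ≥ ((ℓ+2)/3)·ρ. -/
import Mathlib


/-- No approximation ratio `t` better than `((ℓ+2)/3)·ρ` can be certified by the
convex-combination argument: the inequalities for `i = ℓ` and `i = 1` already force
`t ≥ ((ℓ+2)/3)·ρ`. -/
theorem stmt_4 (ℓ : ℕ) (hℓ : 2 ≤ ℓ) (ρ : ℝ) (hρ : 1 ≤ ρ)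
    (t α : ℝ) (hα0 : 0 ≤ α) (hα1 : α ≤ 1)
    (h1 : ((ℓ : ℝ) * ((ℓ : ℝ) + 1) / 2 - (ℓ : ℝ)) * ρ * α + (ℓ : ℝ) * ρ ≤ (ℓ : ℝ) * t)
    (h2 : (2 * 1 / 2 - (ℓ : ℝ)) * ρ * α + (ℓ : ℝ) * ρ ≤ t) :
    (((ℓ : ℝ) + 2) / 3) * ρ ≤ t := by
  have hL : (2 : ℝ) ≤ (ℓ : ℝ) := by exact_mod_cast hℓ
  have hL2 : (0 : ℝ) ≤ (ℓ : ℝ) / 2 := by linarith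
  have h3 := mul_le_mul_of_nonneg_left h2 hL2
  nlinarith [h1, h3]
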